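/- Let n ≥ 3, let K ⊆ ℝⁿ be a proper subdual cone, let A ∈ ℝ^{n×n} be symmetric, and let {v¹, …, vⁿ} be an orthonormal system of eigenvectors of A with A vⁱ = λᵢ vⁱ and λ₁ < λ₂ ≤ ⋯ ≤ λₙ. Set θᵢ = (λᵢ − λ₂)/(λ₂ − λ₁) for i = 2, …, n, L_{λ₂} = {x ∈ ℝⁿ : ⟨v¹, x⟩ ≥ √(θ₂⟨v², x⟩² + ⋯ + θₙ⟨vⁿ, x⟩²)}, and W = (L_{λ₂} ∪ (−L_{λ₂})) ∩ int(K). Suppose that λ₂Iₙ − A is K-copositive. Then the sublevel set [φ_A ≤ c] = {x ∈ int(K) : ⟨Ax, x⟩ ≤ c‖x‖²} is convex for every c ∈ ℝ (equivalently, q_A is spherically quasi-convex) if and only if v¹ ∈ W* ∪ (−W*), where W* is the dual cone of W. In particular, if v¹ ∈ K*, then [φ_A ≤ c] is convex for every c ∈ ℝ. -/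

import Mathlib

open scoped RealInnerProductSpace

private lemma aux_minkowski {ι : Type*} (s : Finset ι) (f g : ι → ℝ) :
    Real.sqrt (∑ i ∈ s, (f i + g i) ^ 2) ≤
      Real.sqrt (∑ i ∈ s, f i ^ 2) + Real.sqrt (∑ i ∈ s, g i ^ 2) := by
  have hf : 0 ≤ ∑ i ∈ s, f i ^ 2 := Finset.sum_nonneg fun i _ => sq_nonneg _
  have hg : 0 ≤ ∑ i ∈ s, g i ^ 2 := Finset.sum_nonneg fun i _ => sq_nonneg _
  have h1 : ∑ i ∈ s, f i * g i ≤
      Real.sqrt (∑ i ∈ s, f i ^ 2) * Real.sqrt (∑ i ∈ s, g i ^ 2) := by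
    calc ∑ i ∈ s, f i * g i ≤ |∑ i ∈ s, f i * g i| := le_abs_self _
      _ = Real.sqrt ((∑ i ∈ s, f i * g i) ^ 2) := (Real.sqrt_sq_eq_abs _).symm
      _ ≤ Real.sqrt ((∑ i ∈ s, f i ^ 2) * ∑ i ∈ s, g i ^ 2) :=
          Real.sqrt_le_sqrt (Finset.sum_mul_sq_le_sq_mul_sq s f g)
      _ = _ := Real.sqrt_mul hf _
  have key : ∑ i ∈ s, (f i + g i) ^ 2 ≤
      (Real.sqrt (∑ i ∈ s, f i ^ 2) + Real.sqrt (∑ i ∈ s, g i ^ 2)) ^ 2 := by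
    have e1 : ∑ i ∈ s, (f i + g i) ^ 2 =
        (∑ i ∈ s, f i ^ 2) + 2 * (∑ i ∈ s, f i * g i) + ∑ i ∈ s, g i ^ 2 := by
      rw [Finset.mul_sum, ← Finset.sum_add_distrib, ← Finset.sum_add_distrib]
      exact Finset.sum_congr rfl fun i _ => by ring
    rw [e1, add_sq, Real.sq_sqrt hf, Real.sq_sqrt hg]
    nlinarith [h1]
  calc Real.sqrt (∑ i ∈ s, (f i + g i) ^ 2)
      ≤ Real.sqrt ((Real.sqrt (∑ i ∈ s, f i ^ 2) + Real.sqrt (∑ i ∈ s, g i ^ 2)) ^ 2) :=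
        Real.sqrt_le_sqrt key
    _ = _ := Real.sqrt_sq (by positivity)

private lemma aux_expand {n : ℕ} [NeZero n] {v : Fin n → EuclideanSpace ℝ (Fin n)}
    (hv : Orthonormal ℝ v) (x : EuclideanSpace ℝ (Fin n)) :
    ∑ i, ⟪v i, x⟫ • v i = x := by
  have : Nonempty (Fin n) := ⟨0⟩
  have hcard : Fintype.card (Fin n) = Module.finrank ℝ (EuclideanSpace ℝ (Fin n)) := by
    simp
  let b := basisOfOrthonormalOfCardEqFinrank hv hcard
  have hb : ⇑b = v := coe_basisOfOrthonormalOfCardEqFinrank hv hcard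
  have hsp : ⊤ ≤ Submodule.span ℝ (Set.range v) := by rw [← hb]; exact b.span_eq.ge
  have h := (OrthonormalBasis.mk hv hsp).sum_repr' x
  simpa [OrthonormalBasis.coe_mk hv hsp] using h

private lemma aux_zero {a b : ℝ} (ha : a < 0) (hb : 0 < b) :
    (1 - -a / (b - a)) * a + -a / (b - a) * b = 0 := by
  have h : b - a ≠ 0 := ne_of_gt (by linarith)
  field_simp
  ring

private lemma aux_combo {p q : ℝ} (hq : q < 0) :
    ∃ a : ℝ, 0 < a ∧ a ≤ 1 / 2 ∧ a * p + (1 - a) * q < 0 := by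
  have h1 : 0 < |p| - q := by have := abs_nonneg p; linarith
  have ha0 : 0 < -q / (2 * (|p| - q)) := div_pos (by linarith) (by linarith)
  refine ⟨-q / (2 * (|p| - q)), ha0, ?_, ?_⟩
  · rw [div_le_iff₀ (by linarith)]
    have := abs_nonneg p
    linarith
  · have h6 : -q / (2 * (|p| - q)) * (|p| - q) = -q / 2 := by
      field_simp
    have h7 : -q / (2 * (|p| - q)) * p ≤ -q / (2 * (|p| - q)) * |p| :=
      mul_le_mul_of_nonneg_left (le_abs_self p) ha0.le
    nlinarith

/-- The quadratic form `x ↦ ⟨A x, x⟩` associated with a matrix `A`. -/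
noncomputable def quadForm {n : ℕ} (A : Matrix (Fin n) (Fin n) ℝ)
    (x : EuclideanSpace ℝ (Fin n)) : ℝ :=
  ⟪Matrix.toEuclideanLin A x, x⟫

/-- `K` is a cone: closed under multiplication by positive scalars. -/
def IsCone {n : ℕ} (K : Set (EuclideanSpace ℝ (Fin n))) : Prop :=
  ∀ ⦃t : ℝ⦄, 0 < t → ∀ ⦃x⦄, x ∈ K → t • x ∈ K

/-- A proper cone: a pointed closed convex cone with nonempty interior. -/
def IsProperCone {n : ℕ} (K : Set (EuclideanSpace ℝ (Fin n))) : Prop :=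
  IsCone K ∧ Convex ℝ K ∧ IsClosed K ∧ K ∩ (-K) ⊆ {0} ∧ (interior K).Nonempty

/-- The dual cone `K* = {u : ⟨u, y⟩ ≥ 0 for all y ∈ K}`. -/
def dualCone {n : ℕ} (K : Set (EuclideanSpace ℝ (Fin n))) : Set (EuclideanSpace ℝ (Fin n)) :=
  {u | ∀ y ∈ K, 0 ≤ ⟪u, y⟫}

/-- The sublevel set `[φ_A ≤ c] = {x ∈ int K : ⟨A x, x⟩ ≤ c ‖x‖²}`. -/
noncomputable def sublevel {n : ℕ} (A : Matrix (Fin n) (Fin n) ℝ)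
    (K : Set (EuclideanSpace ℝ (Fin n))) (c : ℝ) : Set (EuclideanSpace ℝ (Fin n)) :=
  {x ∈ interior K | quadForm A x ≤ c * ‖x‖ ^ 2}

/-- The elliptic cone `L = {x : √(∑_{i≥2} θᵢ ⟨vⁱ, x⟩²) ≤ ⟨v¹, x⟩}`. -/
noncomputable def ellipCone {n : ℕ} [NeZero n]
    (v : Fin n → EuclideanSpace ℝ (Fin n)) (θ : Fin n → ℝ) :
    Set (EuclideanSpace ℝ (Fin n)) :=
  {x | Real.sqrt (∑ i ∈ Finset.univ.erase 0, θ i * ⟪v i, x⟫ ^ 2) ≤ ⟪v 0, x⟫}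

set_option maxHeartbeats 2000000 in
/-- Theorem 1(iii) of the paper: if `λ₂Iₙ - A` is `K`-copositive, then all sublevel
sets `[φ_A ≤ c]` are convex (i.e. `q_A` is spherically quasi-convex) iff
`v¹ ∈ W* ∪ (-W*)`; in particular `v¹ ∈ K*` suffices. -/
theorem stmt11 (n : ℕ) [NeZero n] (hn : 3 ≤ n)
    (K : Set (EuclideanSpace ℝ (Fin n))) (hK : IsProperCone K) (hsub : K ⊆ dualCone K)
    (A : Matrix (Fin n) (Fin n) ℝ) (hA : A.IsSymm)
    (v : Fin n → EuclideanSpace ℝ (Fin n)) (hv : Orthonormal ℝ v)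
    (lam : Fin n → ℝ) (heig : ∀ i, Matrix.toEuclideanLin A (v i) = lam i • v i)
    (hmono : Monotone lam) (h12 : lam 0 < lam 1)
    (hcop : ∀ x ∈ K, 0 ≤ quadForm (lam 1 • (1 : Matrix (Fin n) (Fin n) ℝ) - A) x) :
    let L := ellipCone v (fun i => (lam i - lam 1) / (lam 1 - lam 0))
    let W := (L ∪ -L) ∩ interior K
    ((∀ c : ℝ, Convex ℝ (sublevel A K c)) ↔ v 0 ∈ dualCone W ∪ -dualCone W) ∧
      (v 0 ∈ dualCone K → ∀ c : ℝ, Convex ℝ (sublevel A K c)) := by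
  intro L W
  obtain ⟨hcone, hcvx, hcl, hpt, e, he⟩ := hK
  -- quadratic form in eigen-coordinates
  have hquad : ∀ x, quadForm A x = ∑ i, lam i * ⟪v i, x⟫ ^ 2 := by
    intro x
    have hTx : Matrix.toEuclideanLin A x = ∑ i, (⟪v i, x⟫ * lam i) • v i := by
      conv_lhs => rw [← aux_expand hv x]
      rw [map_sum]
      exact Finset.sum_congr rfl fun i _ => by rw [map_smul, heig i, smul_smul]
    rw [quadForm, hTx, sum_inner]
    exact Finset.sum_congr rfl fun i _ => by rw [real_inner_smul_left]; ring
  have hnorm : ∀ x : EuclideanSpace ℝ (Fin n), ‖x‖ ^ 2 = ∑ i, ⟪v i, x⟫ ^ 2 := by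
    intro x
    rw [← real_inner_self_eq_norm_sq]
    calc ⟪x, x⟫ = ⟪∑ i, ⟪v i, x⟫ • v i, x⟫ := by rw [aux_expand hv x]
      _ = ∑ i, ⟪v i, x⟫ ^ 2 := by
          rw [sum_inner]
          exact Finset.sum_congr rfl fun i _ => by rw [real_inner_smul_left]; ring
  have epsi : ∀ x, ∑ i, (lam i - lam 1) * ⟪v i, x⟫ ^ 2 = quadForm A x - lam 1 * ‖x‖ ^ 2 := by
    intro x
    rw [hquad, hnorm, Finset.mul_sum, ← Finset.sum_sub_distrib]
    exact Finset.sum_congr rfl fun i _ => by ring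
  have honemul : ∀ x : EuclideanSpace ℝ (Fin n),
      Matrix.toEuclideanLin (1 : Matrix (Fin n) (Fin n) ℝ) x = x := by
    intro x
    rw [Matrix.toEuclideanLin_apply, Matrix.one_mulVec]
  have hpsi : ∀ x ∈ K, ∑ i, (lam i - lam 1) * ⟪v i, x⟫ ^ 2 ≤ 0 := by
    intro x hx
    have h0 := hcop x hx
    have h1 : quadForm (lam 1 • (1 : Matrix (Fin n) (Fin n) ℝ) - A) x
        = lam 1 * ‖x‖ ^ 2 - quadForm A x := by
      rw [quadForm, map_sub, map_smul, LinearMap.sub_apply, LinearMap.smul_apply,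
        inner_sub_left, real_inner_smul_left, honemul, real_inner_self_eq_norm_sq]
      rfl
    rw [epsi x]
    rw [h1] at h0
    linarith
  have hfin1 : ∀ i : Fin n, i ≠ 0 → lam 1 ≤ lam i := by
    intro i hi
    apply hmono
    have h1n : 1 % n = 1 := Nat.mod_eq_of_lt (by omega)
    rw [Fin.le_def, Fin.val_one', h1n]
    have hi' : 0 < i := (Fin.pos_iff_ne_zero' i).mpr hi
    rw [Fin.lt_def, Fin.val_zero] at hi'
    omega
  have hpeel : ∀ (f : Fin n → ℝ),
      ∑ i, f i = f 0 + ∑ i ∈ Finset.univ.erase 0, f i :=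
    fun f => (Finset.add_sum_erase _ _ (Finset.mem_univ 0)).symm
  have hx0 : ∀ x ∈ interior K, x ≠ (0 : EuclideanSpace ℝ (Fin n)) := by
    intro x hx hx'
    rw [hx'] at hx
    obtain ⟨ε, hε, hball⟩ := Metric.isOpen_iff.mp isOpen_interior 0 hx
    have hmem : ∀ r : ℝ, |r| < ε → r • v 0 ∈ K := by
      intro r hr
      apply interior_subset
      apply hball
      rw [Metric.mem_ball, dist_zero_right, norm_smul, hv.1 0, mul_one]
      exact hr
    have h1 : (ε / 2) • v 0 ∈ K := hmem _ (by rw [abs_of_pos (by linarith)]; linarith)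
    have h2 : (-(ε / 2)) • v 0 ∈ K := hmem _ (by rw [abs_neg, abs_of_pos (by linarith)]; linarith)
    have h3 : (ε / 2) • v 0 ∈ K ∩ (-K) := ⟨h1, by simpa [Set.mem_neg, neg_smul] using h2⟩
    have h4 : (ε / 2) • v 0 = 0 := hpt h3
    rw [smul_eq_zero] at h4
    rcases h4 with h | h
    · linarith
    · have := hv.1 0
      rw [h, norm_zero] at this
      norm_num at this
  have hnsq : ∀ x ∈ interior K, 0 < ‖x‖ ^ 2 := by
    intro x hx
    exact pow_pos (norm_pos_iff.mpr (hx0 x hx)) 2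
  -- interior K ⊆ W
  have hintW : ∀ x ∈ interior K, x ∈ W := by
    intro x hx
    refine ⟨?_, hx⟩
    have h1 := hpsi x (interior_subset hx)
    rw [hpeel (fun i => (lam i - lam 1) * ⟪v i, x⟫ ^ 2)] at h1
    have hSle : ∑ i ∈ Finset.univ.erase 0,
        ((lam i - lam 1) / (lam 1 - lam 0)) * ⟪v i, x⟫ ^ 2 ≤ ⟪v 0, x⟫ ^ 2 := by
      have e1 : ∀ i, ((lam i - lam 1) / (lam 1 - lam 0)) * ⟪v i, x⟫ ^ 2
          = ((lam i - lam 1) * ⟪v i, x⟫ ^ 2) / (lam 1 - lam 0) := fun i => by ring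
      simp_rw [e1]
      rw [← Finset.sum_div, div_le_iff₀ (by linarith)]
      nlinarith [h1]
    have hsq : Real.sqrt (∑ i ∈ Finset.univ.erase 0,
        ((lam i - lam 1) / (lam 1 - lam 0)) * ⟪v i, x⟫ ^ 2) ≤ |⟪v 0, x⟫| := by
      rw [← Real.sqrt_sq_eq_abs]
      exact Real.sqrt_le_sqrt hSle
    rcases le_or_gt 0 ⟪v 0, x⟫ with h | h
    · left
      show x ∈ ellipCone v _
      simp only [ellipCone, Set.mem_setOf_eq]
      rwa [abs_of_nonneg h] at hsq
    · right
      show x ∈ -(ellipCone v _)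
      rw [Set.mem_neg]
      simp only [ellipCone, Set.mem_setOf_eq]
      have e2 : ∀ i : Fin n, ⟪v i, -x⟫ ^ 2 = ⟪v i, x⟫ ^ 2 := fun i => by
        rw [inner_neg_right]; ring
      simp_rw [e2]
      rw [inner_neg_right]
      rwa [abs_of_neg h] at hsq
  -- dual of interior equals dual of K
  have hdualint : ∀ u : EuclideanSpace ℝ (Fin n),
      (∀ y ∈ interior K, 0 ≤ ⟪u, y⟫) → ∀ y ∈ K, 0 ≤ ⟪u, y⟫ := by
    intro u hu y hy
    by_contra hq
    push_neg at hq
    obtain ⟨a, ha0, ha1, hkey⟩ := aux_combo (p := ⟪u, e⟫) hq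
    have hmem := hcvx.combo_interior_closure_mem_interior he (subset_closure hy) ha0
      (by linarith : (0:ℝ) ≤ 1 - a) (by ring)
    have h2 := hu _ hmem
    rw [inner_add_right, real_inner_smul_right, real_inner_smul_right] at h2
    linarith
  -- backward direction: sign condition implies convexity of all sublevel sets
  have hback : ∀ s : ℝ, (s = 1 ∨ s = -1) → (∀ y ∈ K, 0 ≤ s * ⟪v 0, y⟫) →
      ∀ c : ℝ, Convex ℝ (sublevel A K c) := by
    intro s hs hsv c
    have hs2 : s ^ 2 = 1 := by rcases hs with rfl | rfl <;> norm_num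
    rcases le_or_gt (lam 1) c with hc1 | hc1
    · have hEq : sublevel A K c = interior K := by
        ext x
        simp only [sublevel, Set.mem_setOf_eq]
        constructor
        · exact fun h => h.1
        · intro hx
          refine ⟨hx, ?_⟩
          have h1 := hpsi x (interior_subset hx)
          rw [epsi x] at h1
          nlinarith [sq_nonneg ‖x‖]
      rw [hEq]
      exact hcvx.interior
    rcases lt_or_ge c (lam 0) with hc0 | hc0
    · have hEq : sublevel A K c = ∅ := by
        ext x
        simp only [sublevel, Set.mem_setOf_eq, Set.mem_empty_iff_false, iff_false, not_and]
        intro hx hle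
        have hxpos := hnsq x hx
        have hlow : lam 0 * ‖x‖ ^ 2 ≤ quadForm A x := by
          rw [hquad, hnorm, Finset.mul_sum]
          apply Finset.sum_le_sum
          intro i _
          have := hmono (Fin.zero_le (a := i))
          nlinarith [sq_nonneg ⟪v i, x⟫]
        nlinarith
      rw [hEq]
      exact convex_empty
    · -- main case : lam 0 ≤ c < lam 1
      set σ := Finset.univ.erase (0 : Fin n) with hσ
      have hNle : ∀ i ∈ σ, (0:ℝ) ≤ lam i - c := by
        intro i hi
        have := hfin1 i (Finset.ne_of_mem_erase hi)
        linarith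
      set N : EuclideanSpace ℝ (Fin n) → ℝ :=
        fun x => Real.sqrt (∑ i ∈ σ, (lam i - c) * ⟪v i, x⟫ ^ 2) with hN
      have hsplit : ∀ x : EuclideanSpace ℝ (Fin n),
          quadForm A x - c * ‖x‖ ^ 2
            = (lam 0 - c) * ⟪v 0, x⟫ ^ 2 + ∑ i ∈ σ, (lam i - c) * ⟪v i, x⟫ ^ 2 := by
        intro x
        rw [hquad, hnorm, Finset.mul_sum, ← Finset.sum_sub_distrib]
        have e1 : ∀ i : Fin n, lam i * ⟪v i, x⟫ ^ 2 - c * ⟪v i, x⟫ ^ 2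
            = (lam i - c) * ⟪v i, x⟫ ^ 2 := fun i => by ring
        simp_rw [e1]
        exact hpeel _
      have hchar : ∀ x ∈ interior K,
          (quadForm A x ≤ c * ‖x‖ ^ 2 ↔
            N x ≤ Real.sqrt (c - lam 0) * (s * ⟪v 0, x⟫)) := by
        intro x hx
        have ht0 : 0 ≤ s * ⟪v 0, x⟫ := hsv x (interior_subset hx)
        have hsum0 : 0 ≤ ∑ i ∈ σ, (lam i - c) * ⟪v i, x⟫ ^ 2 :=
          Finset.sum_nonneg fun i hi => mul_nonneg (hNle i hi) (sq_nonneg _)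
        constructor
        · intro hq
          have h2 : ∑ i ∈ σ, (lam i - c) * ⟪v i, x⟫ ^ 2
              ≤ (c - lam 0) * (s * ⟪v 0, x⟫) ^ 2 := by
            have := hsplit x
            nlinarith [sq_nonneg ⟪v 0, x⟫]
          calc N x ≤ Real.sqrt ((c - lam 0) * (s * ⟪v 0, x⟫) ^ 2) := Real.sqrt_le_sqrt h2
            _ = Real.sqrt (c - lam 0) * Real.sqrt ((s * ⟪v 0, x⟫) ^ 2) :=
                Real.sqrt_mul (by linarith) _
            _ = Real.sqrt (c - lam 0) * (s * ⟪v 0, x⟫) := by rw [Real.sqrt_sq ht0]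
        · intro hle
          have h3 : (N x) ^ 2 ≤ (Real.sqrt (c - lam 0) * (s * ⟪v 0, x⟫)) ^ 2 := by
            apply pow_le_pow_left₀ (Real.sqrt_nonneg _) hle
          rw [hN] at h3
          rw [Real.sq_sqrt hsum0, mul_pow, Real.sq_sqrt (by linarith : (0:ℝ) ≤ c - lam 0)] at h3
          have := hsplit x
          nlinarith
      intro x hx y hy a b ha hb hab
      simp only [sublevel, Set.mem_setOf_eq] at hx hy ⊢
      have hzi : a • x + b • y ∈ interior K := hcvx.interior hx.1 hy.1 ha hb hab
      refine ⟨hzi, ?_⟩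
      rw [hchar _ hzi]
      have hinz : ⟪v 0, a • x + b • y⟫ = a * ⟪v 0, x⟫ + b * ⟪v 0, y⟫ := by
        rw [inner_add_right, real_inner_smul_right, real_inner_smul_right]
      have hNsub : N (a • x + b • y) ≤ a * N x + b * N y := by
        have e2 : ∀ i ∈ σ, (lam i - c) * ⟪v i, a • x + b • y⟫ ^ 2
            = ((a * (Real.sqrt (lam i - c) * ⟪v i, x⟫)) + (b * (Real.sqrt (lam i - c) * ⟪v i, y⟫))) ^ 2 := by
          intro i hi
          have h4 : ⟪v i, a • x + b • y⟫ = a * ⟪v i, x⟫ + b * ⟪v i, y⟫ := by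
            rw [inner_add_right, real_inner_smul_right, real_inner_smul_right]
          rw [h4]
          have h5 := Real.sq_sqrt (hNle i hi)
          linear_combination (-(a * ⟪v i, x⟫ + b * ⟪v i, y⟫) ^ 2) * h5
        have e3 : ∀ (u : EuclideanSpace ℝ (Fin n)) (r : ℝ), 0 ≤ r →
            Real.sqrt (∑ i ∈ σ, (r * (Real.sqrt (lam i - c) * ⟪v i, u⟫)) ^ 2)
              = r * N u := by
          intro u r hr
          have e4 : ∀ i ∈ σ, (r * (Real.sqrt (lam i - c) * ⟪v i, u⟫)) ^ 2
              = r ^ 2 * ((lam i - c) * ⟪v i, u⟫ ^ 2) := by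
            intro i hi
            have h5 := Real.sq_sqrt (hNle i hi)
            linear_combination r ^ 2 * ⟪v i, u⟫ ^ 2 * h5
          rw [Finset.sum_congr rfl e4, ← Finset.mul_sum, Real.sqrt_mul (sq_nonneg r),
            Real.sqrt_sq hr]
        calc N (a • x + b • y)
            = Real.sqrt (∑ i ∈ σ, ((a * (Real.sqrt (lam i - c) * ⟪v i, x⟫))
              + (b * (Real.sqrt (lam i - c) * ⟪v i, y⟫))) ^ 2) := by
              rw [hN]; exact congrArg Real.sqrt (Finset.sum_congr rfl e2)
          _ ≤ Real.sqrt (∑ i ∈ σ, (a * (Real.sqrt (lam i - c) * ⟪v i, x⟫)) ^ 2)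
              + Real.sqrt (∑ i ∈ σ, (b * (Real.sqrt (lam i - c) * ⟪v i, y⟫)) ^ 2) :=
              aux_minkowski σ _ _
          _ = a * N x + b * N y := by rw [e3 x a ha, e3 y b hb]
      have h1 := (hchar x hx.1).mp hx.2
      have h2 := (hchar y hy.1).mp hy.2
      rw [hinz]
      have h5 : a * N x ≤ a * (Real.sqrt (c - lam 0) * (s * ⟪v 0, x⟫)) :=
        mul_le_mul_of_nonneg_left h1 ha
      have h6 : b * N y ≤ b * (Real.sqrt (c - lam 0) * (s * ⟪v 0, y⟫)) :=
        mul_le_mul_of_nonneg_left h2 hb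
      have h7 : Real.sqrt (c - lam 0) * (s * (a * ⟪v 0, x⟫ + b * ⟪v 0, y⟫))
          = a * (Real.sqrt (c - lam 0) * (s * ⟪v 0, x⟫))
            + b * (Real.sqrt (c - lam 0) * (s * ⟪v 0, y⟫)) := by ring
      rw [h7]
      linarith
  -- perturbation step used in the forward direction
  have hstep : ∀ y ∈ K, ∀ s : ℝ, (s = 1 ∨ s = -1) → s * ⟪v 0, y⟫ < 0 →
      ∃ w ∈ interior K, s * ⟪v 0, w⟫ < 0 ∧ ∑ i, (lam i - lam 1) * ⟪v i, w⟫ ^ 2 < 0 := by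
    intro y hy s hs hsy
    have hs2 : s ^ 2 = 1 := by rcases hs with rfl | rfl <;> norm_num
    have habs : |s| = 1 := by rcases hs with rfl | rfl <;> norm_num
    -- step 1: move into the interior keeping the sign
    obtain ⟨a, ha0, ha1, hkey⟩ := aux_combo (p := s * ⟪v 0, e⟫) hsy
    have hw0I : a • e + (1 - a) • y ∈ interior K :=
      hcvx.combo_interior_closure_mem_interior he (subset_closure hy) ha0
        (by linarith : (0:ℝ) ≤ 1 - a) (by ring)
    set w0 := a • e + (1 - a) • y with hw0
    have hw0t : s * ⟪v 0, w0⟫ < 0 := by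
      have h4 : ⟪v 0, w0⟫ = a * ⟪v 0, e⟫ + (1 - a) * ⟪v 0, y⟫ := by
        rw [hw0, inner_add_right, real_inner_smul_right, real_inner_smul_right]
      rw [h4]
      nlinarith [hkey]
    -- step 2: perturb along ± v 0 to make the inequality strict
    obtain ⟨ε, hε, hball⟩ := Metric.isOpen_iff.mp isOpen_interior w0 hw0I
    set w := w0 + (-(ε / 2) * s) • v 0 with hw
    have hwI : w ∈ interior K := by
      apply hball
      rw [Metric.mem_ball, dist_eq_norm]
      have h8 : w - w0 = (-(ε / 2) * s) • v 0 := by rw [hw]; abel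
      rw [h8, norm_smul, hv.1 0, mul_one, Real.norm_eq_abs, abs_mul, habs, mul_one,
        abs_neg, abs_of_pos (by linarith)]
      linarith
    have hwt : ∀ i : Fin n, ⟪v i, w⟫ = ⟪v i, w0⟫ + (if i = 0 then -(ε / 2) * s else 0) := by
      intro i
      rw [hw, inner_add_right, real_inner_smul_right, orthonormal_iff_ite.mp hv i 0]
      by_cases hi : i = 0 <;> simp [hi]
    have hwt0 : s * ⟪v 0, w⟫ < 0 := by
      have := hwt 0
      rw [if_pos rfl] at this
      rw [this]
      nlinarith
    refine ⟨w, hwI, hwt0, ?_⟩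
    have herase : ∑ i ∈ Finset.univ.erase 0, (lam i - lam 1) * ⟪v i, w⟫ ^ 2
        = ∑ i ∈ Finset.univ.erase 0, (lam i - lam 1) * ⟪v i, w0⟫ ^ 2 :=
      Finset.sum_congr rfl fun i hi => by
        rw [hwt i, if_neg (Finset.ne_of_mem_erase hi), add_zero]
    have hψ0 := hpsi w0 (interior_subset hw0I)
    rw [hpeel (fun i => (lam i - lam 1) * ⟪v i, w0⟫ ^ 2)] at hψ0
    rw [hpeel (fun i => (lam i - lam 1) * ⟪v i, w⟫ ^ 2), herase]
    have h9 := hwt 0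
    rw [if_pos rfl] at h9
    rw [h9]
    have hG : 0 < ε * (-(s * ⟪v 0, w0⟫)) + ε ^ 2 / 4 * s ^ 2 := by nlinarith [hw0t, hε]
    have hprod := mul_pos (show (0:ℝ) < lam 1 - lam 0 by linarith) hG
    nlinarith [hψ0, hprod]
  -- forward direction
  have hfwd : (∀ c : ℝ, Convex ℝ (sublevel A K c)) →
      (∀ y ∈ K, 0 ≤ ⟪v 0, y⟫) ∨ (∀ y ∈ K, 0 ≤ -⟪v 0, y⟫) := by
    intro hall
    by_contra hcon
    push_neg at hcon
    obtain ⟨⟨y1, hy1K, hy1⟩, ⟨y2, hy2K, hy2⟩⟩ := hcon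
    obtain ⟨w1, hw1I, hw1t, hw1ψ⟩ := hstep y1 hy1K 1 (Or.inl rfl) (by linarith [hy1])
    obtain ⟨w2, hw2I, hw2t, hw2ψ⟩ := hstep y2 hy2K (-1) (Or.inr rfl) (by linarith [hy2])
    have hα : ⟪v 0, w1⟫ < 0 := by linarith [hw1t]
    have hβ : 0 < ⟪v 0, w2⟫ := by nlinarith [hw2t]
    have hn1 := hnsq w1 hw1I
    have hn2 := hnsq w2 hw2I
    have hq1 : quadForm A w1 < lam 1 * ‖w1‖ ^ 2 := by
      have := epsi w1; linarith [hw1ψ]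
    have hq2 : quadForm A w2 < lam 1 * ‖w2‖ ^ 2 := by
      have := epsi w2; linarith [hw2ψ]
    set c := max (quadForm A w1 / ‖w1‖ ^ 2) (quadForm A w2 / ‖w2‖ ^ 2) with hc
    have hclt : c < lam 1 :=
      max_lt ((div_lt_iff₀ hn1).mpr (by linarith)) ((div_lt_iff₀ hn2).mpr (by linarith))
    have hm1 : w1 ∈ sublevel A K c := by
      simp only [sublevel, Set.mem_setOf_eq]
      refine ⟨hw1I, ?_⟩
      have h1 : quadForm A w1 / ‖w1‖ ^ 2 ≤ c := le_max_left _ _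
      calc quadForm A w1 = quadForm A w1 / ‖w1‖ ^ 2 * ‖w1‖ ^ 2 := (div_mul_cancel₀ _ hn1.ne').symm
        _ ≤ c * ‖w1‖ ^ 2 := mul_le_mul_of_nonneg_right h1 hn1.le
    have hm2 : w2 ∈ sublevel A K c := by
      simp only [sublevel, Set.mem_setOf_eq]
      refine ⟨hw2I, ?_⟩
      have h1 : quadForm A w2 / ‖w2‖ ^ 2 ≤ c := le_max_right _ _
      calc quadForm A w2 = quadForm A w2 / ‖w2‖ ^ 2 * ‖w2‖ ^ 2 := (div_mul_cancel₀ _ hn2.ne').symm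
        _ ≤ c * ‖w2‖ ^ 2 := mul_le_mul_of_nonneg_right h1 hn2.le
    set θ := -⟪v 0, w1⟫ / (⟪v 0, w2⟫ - ⟪v 0, w1⟫) with hθ
    have hθ0 : 0 < θ := div_pos (by linarith) (by linarith)
    have hθ1 : θ < 1 := (div_lt_one (by linarith)).mpr (by linarith)
    have hz : (1 - θ) • w1 + θ • w2 ∈ sublevel A K c :=
      hall c hm1 hm2 (by linarith) hθ0.le (by ring)
    simp only [sublevel, Set.mem_setOf_eq] at hz
    set z := (1 - θ) • w1 + θ • w2 with hzdef
    have hzt : ⟪v 0, z⟫ = 0 := by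
      have h4 : ⟪v 0, z⟫ = (1 - θ) * ⟪v 0, w1⟫ + θ * ⟪v 0, w2⟫ := by
        rw [hzdef, inner_add_right, real_inner_smul_right, real_inner_smul_right]
      rw [h4, hθ]
      exact aux_zero hα hβ
    have hzn := hnsq z hz.1
    have hlow : lam 1 * ‖z‖ ^ 2 ≤ quadForm A z := by
      have e := epsi z
      have h5 : 0 ≤ ∑ i, (lam i - lam 1) * ⟪v i, z⟫ ^ 2 := by
        rw [hpeel (fun i => (lam i - lam 1) * ⟪v i, z⟫ ^ 2), hzt]
        have h6 : 0 ≤ ∑ i ∈ Finset.univ.erase 0, (lam i - lam 1) * ⟪v i, z⟫ ^ 2 :=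
          Finset.sum_nonneg fun i hi =>
            mul_nonneg (by linarith [hfin1 i (Finset.ne_of_mem_erase hi)]) (sq_nonneg _)
        simpa using h6
      linarith
    have hzq := hz.2
    nlinarith
  -- assembling the statement
  have hWsubK : ∀ y ∈ W, y ∈ K := fun y hy => interior_subset hy.2
  refine ⟨⟨?_, ?_⟩, ?_⟩
  · intro hall
    rcases hfwd hall with h | h
    · exact Or.inl fun y hy => h y (hWsubK y hy)
    · refine Or.inr ?_
      rw [Set.mem_neg]
      intro y hy
      rw [inner_neg_left]
      have := h y (hWsubK y hy)
      linarith
  · intro h c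
    rcases h with h | h
    · refine hback 1 (Or.inl rfl) (fun y hy => ?_) c
      rw [one_mul]
      exact hdualint (v 0) (fun z hz => h z (hintW z hz)) y hy
    · have h' : -v 0 ∈ dualCone W := Set.mem_neg.mp h
      refine hback (-1) (Or.inr rfl) (fun y hy => ?_) c
      have := hdualint (-v 0) (fun z hz => h' z (hintW z hz)) y hy
      rw [inner_neg_left] at this
      linarith
  · intro h c
    refine hback 1 (Or.inl rfl) (fun y hy => ?_) c
    rw [one_mul]
    exact h y hy
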